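/- For a connected weighted graph with Laplacian Q, resistance matrix Ω, node resistance curvature vector p and all-ones vector u, the matrix identity Q·Ω = −2I + 2·p·uᵀ holds; in particular, for every pair of distinct nodes i ≠ x one has 2p_i = k_i·ω_ix − Σ_{j∼i} c_ij·ω_jx. -/
import Mathlib


open Matrix

variable {V : Type*}

/- The weighted Laplacian matrix of a weighted graph `(V, G, c)`:
`Q i i = ∑_{k ∼ i} c i k`, `Q i j = -c i j` for links `i ∼ j`, and `0` otherwise. -/
open Classical in
noncomputable def lapMatrix [Fintype V] (G : SimpleGraph V) (c : V → V → ℝ) :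
    Matrix V V ℝ :=
  Matrix.of fun i j =>
    if i = j then ∑ k, if G.Adj i k then c i k else 0
    else if G.Adj i j then -c i j else 0

/- The four Penrose equations characterizing the Moore–Penrose pseudoinverse. -/
def IsMoorePenroseInv [Fintype V] (Q Qd : Matrix V V ℝ) : Prop :=
  Q * Qd * Q = Q ∧ Qd * Q * Qd = Qd ∧ (Q * Qd)ᵀ = Q * Qd ∧ (Qd * Q)ᵀ = Qd * Q

/- The effective resistance `ω i j = (e_i - e_j)ᵀ Q† (e_i - e_j)`, computed from a
pseudoinverse `Qd` of the Laplacian. -/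
open Classical in
noncomputable def effRes [Fintype V] (Qd : Matrix V V ℝ) (i j : V) : ℝ :=
  (Pi.single i 1 - Pi.single j 1) ⬝ᵥ Qd *ᵥ (Pi.single i 1 - Pi.single j 1)

/- The node resistance curvature `p i = 1 - (1/2) ∑_{j ∼ i} c i j * ω i j`. -/
open Classical in
noncomputable def nodeCurv [Fintype V] (G : SimpleGraph V) (c : V → V → ℝ)
    (Qd : Matrix V V ℝ) (i : V) : ℝ :=
  1 - 1 / 2 * ∑ j, if G.Adj i j then c i j * effRes Qd i j else 0

/- The resistance matrix `Ω` with entries `(Ω) i j = ω i j`. -/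
noncomputable def resMatrix [Fintype V] (Qd : Matrix V V ℝ) : Matrix V V ℝ :=
  Matrix.of fun i j => effRes Qd i j

section Aux

set_option linter.unusedSectionVars false

variable [Fintype V] [DecidableEq V] (G : SimpleGraph V) [DecidableRel G.Adj]
  (c : V → V → ℝ)

lemma lap_apply_ne (i j : V) (h : i ≠ j) :
    lapMatrix G c i j = if G.Adj i j then -c i j else 0 := by
  classical
  simp only [lapMatrix, Matrix.of_apply, if_neg h]
  split_ifs <;> rfl

lemma lap_apply_diag (i : V) :
    lapMatrix G c i i = ∑ k, if G.Adj i k then c i k else 0 := by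
  classical
  simp only [lapMatrix, Matrix.of_apply, if_true, eq_self_iff_true]
  exact Finset.sum_congr rfl fun k _ => by split_ifs <;> rfl

lemma lap_row_sum (i : V) : ∑ j, lapMatrix G c i j = 0 := by
  classical
  rw [← Finset.add_sum_erase _ _ (Finset.mem_univ i), lap_apply_diag]
  have h1 : ∑ j ∈ Finset.univ.erase i, lapMatrix G c i j
      = ∑ j ∈ Finset.univ.erase i, (if G.Adj i j then -c i j else 0) := by
    refine Finset.sum_congr rfl fun j hj => ?_
    exact lap_apply_ne G c i j (Ne.symm (Finset.ne_of_mem_erase hj))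
  rw [h1, Finset.sum_erase (f := fun j => if G.Adj i j then -c i j else 0)
    (h := by simp [G.irrefl])]
  have : ∑ j, (if G.Adj i j then -c i j else 0) = -∑ j, (if G.Adj i j then c i j else 0) := by
    rw [← Finset.sum_neg_distrib]
    refine Finset.sum_congr rfl fun j _ => ?_
    by_cases h : G.Adj i j <;> simp [h]
  rw [this]; ring

lemma lap_symm (hsymm : ∀ i j, c i j = c j i) (i j : V) :
    lapMatrix G c i j = lapMatrix G c j i := by
  classical
  by_cases h : i = j
  · subst h; rfl
  · rw [lap_apply_ne G c i j h, lap_apply_ne G c j i (Ne.symm h)]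
    rw [hsymm i j]
    by_cases ha : G.Adj i j
    · rw [if_pos ha, if_pos ha.symm]
    · rw [if_neg ha, if_neg (fun hb => ha hb.symm)]

lemma lap_transpose (hsymm : ∀ i j, c i j = c j i) :
    (lapMatrix G c)ᵀ = lapMatrix G c := by
  ext i j; exact lap_symm G c hsymm j i

lemma lap_mulVec (v : V → ℝ) (i : V) :
    (lapMatrix G c *ᵥ v) i = ∑ j, if G.Adj i j then c i j * (v i - v j) else 0 := by
  classical
  have : (lapMatrix G c *ᵥ v) i = ∑ j, lapMatrix G c i j * v j := rfl
  rw [this, ← Finset.add_sum_erase _ _ (Finset.mem_univ i), lap_apply_diag]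
  have h1 : ∑ j ∈ Finset.univ.erase i, lapMatrix G c i j * v j
      = ∑ j ∈ Finset.univ.erase i, (if G.Adj i j then -(c i j * v j) else 0) := by
    refine Finset.sum_congr rfl fun j hj => ?_
    rw [lap_apply_ne G c i j (Ne.symm (Finset.ne_of_mem_erase hj))]
    by_cases h : G.Adj i j
    · simp only [if_pos h]; ring
    · simp only [if_neg h, zero_mul]
  rw [h1, Finset.sum_erase (f := fun j => if G.Adj i j then -(c i j * v j) else 0)
    (h := by simp [G.irrefl]), Finset.sum_mul]
  rw [← Finset.sum_add_distrib]
  refine Finset.sum_congr rfl fun j _ => ?_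
  by_cases h : G.Adj i j
  · simp only [if_pos h]; ring
  · simp only [if_neg h, add_zero, zero_mul]

/-- Kernel of the weighted Laplacian is constant vectors, for connected graphs. -/
lemma lap_ker_const (hpos : ∀ i j, G.Adj i j → 0 < c i j) (hconn : G.Connected)
    (v : V → ℝ) (hv : lapMatrix G c *ᵥ v = 0) (a b : V) : v a = v b := by
  classical
  have : Nonempty V := hconn.nonempty
  obtain ⟨m, hm⟩ := Finite.exists_max v
  -- neighbors of a maximum point attain the maximum
  have step : ∀ x, v x = v m → ∀ y, G.Adj x y → v y = v m := by
    intro x hx y hxy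
    have h0 : (lapMatrix G c *ᵥ v) x = 0 := by rw [hv]; rfl
    rw [lap_mulVec] at h0
    have hnn : ∀ j ∈ Finset.univ, (0:ℝ) ≤ if G.Adj x j then c x j * (v x - v j) else 0 := by
      intro j _
      by_cases h : G.Adj x j
      · rw [if_pos h]
        exact mul_nonneg (hpos x j h).le (by rw [hx]; linarith [hm j])
      · rw [if_neg h]
    have := (Finset.sum_eq_zero_iff_of_nonneg hnn).mp h0 y (Finset.mem_univ y)
    rw [if_pos hxy] at this
    have hc := hpos x y hxy
    have : v x - v y = 0 := by
      rcases mul_eq_zero.mp this with h | h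
      · exact absurd h (ne_of_gt hc)
      · exact h
    rw [← hx]; linarith
  have haux : ∀ x z : V, G.Walk x z → v x = v m → v z = v m := by
    intro x z w
    induction w with
    | nil => exact fun h => h
    | cons h p ih => exact fun hx => ih (step _ hx _ h)
  have hall : ∀ z, v z = v m := fun z => (hconn.preconnected m z).elim fun w => haux m z w rfl
  rw [hall a, hall b]

end Aux

section Main

set_option linter.unusedSectionVars false

variable [Fintype V] [DecidableEq V] (G : SimpleGraph V) [DecidableRel G.Adj]
  (c : V → V → ℝ)

lemma effRes_eq (Qd : Matrix V V ℝ) (a b : V) :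
    effRes Qd a b = Qd a a + Qd b b - Qd a b - Qd b a := by
  classical
  simp only [effRes, mulVec_sub, dotProduct_sub, sub_dotProduct, mulVec_single,
    single_dotProduct]
  simp [Pi.single_apply]
  ring

/-- A matrix `M` with `Q M = Q` and zero column sums fixes `e_i - e_x`. -/
lemma proj_entry (hsymm : ∀ i j, c i j = c j i) (hpos : ∀ i j, G.Adj i j → 0 < c i j)
    (hconn : G.Connected) (M : Matrix V V ℝ) (hQM : lapMatrix G c * M = lapMatrix G c)
    (hMcol : ∀ j, ∑ a, M a j = 0) (i x : V) (hix : i ≠ x) :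
    M i i - M i x = 1 := by
  classical
  have : Nonempty V := hconn.nonempty
  set w : V → ℝ := Pi.single i 1 - Pi.single x 1 with hw
  have hker : lapMatrix G c *ᵥ (M *ᵥ w - w) = 0 := by
    rw [mulVec_sub, mulVec_mulVec, hQM, sub_self]
  have hconst := lap_ker_const G c hpos hconn _ hker
  have hsumMw : ∑ a, (M *ᵥ w) a = 0 := by
    have : ∑ a, (M *ᵥ w) a = ∑ j, (∑ a, M a j) * w j := by
      simp only [mulVec, dotProduct]
      rw [Finset.sum_comm]
      exact Finset.sum_congr rfl fun j _ => by rw [Finset.sum_mul]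
    rw [this]
    simp [hMcol]
  have hsumw : ∑ a, w a = 0 := by
    simp [hw, Finset.sum_sub_distrib, Finset.sum_pi_single]
  have hsum : ∑ a, (M *ᵥ w - w) a = 0 := by
    simp only [Pi.sub_apply, Finset.sum_sub_distrib, hsumMw, hsumw, sub_self]
  have hzero : ∀ a, (M *ᵥ w - w) a = 0 := by
    intro a
    have h1 : ∑ b : V, (M *ᵥ w - w) b = ∑ _b : V, (M *ᵥ w - w) a :=
      Finset.sum_congr rfl fun b _ => hconst b a
    rw [hsum, Finset.sum_const, nsmul_eq_mul] at h1
    have hcard : (0:ℝ) < (Fintype.card V : ℝ) := by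
      exact_mod_cast Fintype.card_pos
    have := h1.symm
    rcases mul_eq_zero.mp this with h | h
    · exact absurd h (ne_of_gt hcard)
    · exact h
  have hz := hzero i
  have hMw : (M *ᵥ w) i = M i i - M i x := by
    rw [hw, mulVec_sub]
    simp [mulVec_single]
  have hwi : w i = 1 := by
    simp [hw, Pi.single_apply, hix, Ne.symm hix]
  rw [Pi.sub_apply, hMw, hwi] at hz
  linarith

end Main

/- STATEMENT 14: the matrix identity `Q Ω = -2 I + 2 p uᵀ`; in particular, for all
`i ≠ x`, `2 p_i = k_i ω_ix - ∑_{j ∼ i} c_ij ω_jx`. -/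
theorem lap_mul_resMatrix
    [Fintype V] [DecidableEq V] (G : SimpleGraph V) [DecidableRel G.Adj]
    (c : V → V → ℝ) (hsymm : ∀ i j, c i j = c j i)
    (hpos : ∀ i j, G.Adj i j → 0 < c i j)
    (hconn : G.Connected)
    (Qd : Matrix V V ℝ) (hQd : IsMoorePenroseInv (lapMatrix G c) Qd) :
    lapMatrix G c * resMatrix Qd =
      (-2 : ℝ) • (1 : Matrix V V ℝ) +
        (2 : ℝ) • Matrix.vecMulVec (fun i => nodeCurv G c Qd i) (fun _ => (1 : ℝ)) ∧
    ∀ i x : V, i ≠ x →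
      2 * nodeCurv G c Qd i =
        (∑ j, if G.Adj i j then c i j else 0) * effRes Qd i x -
          ∑ j, if G.Adj i j then c i j * effRes Qd j x else 0 := by
  obtain ⟨h1, h2, h3, h4⟩ := hQd
  set Q := lapMatrix G c with hQdef
  have hQT : Qᵀ = Q := lap_transpose G c hsymm
  -- Q * (Q * Qd) = Q
  have hQP : Q * (Q * Qd) = Q := by
    have h := congrArg Matrix.transpose h1
    rw [transpose_mul, h3, hQT] at h
    exact h
  have hQS : Q * (Qd * Q) = Q := by rw [← mul_assoc]; exact h1
  -- Q * Qdᵀ = Qd * Q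
  have hS' : Q * Qdᵀ = Qd * Q := by
    have h : (Qd * Qᵀ)ᵀ = Q * Qdᵀ := by rw [transpose_mul, transpose_transpose]
    rw [hQT] at h
    rw [← h, h4]
  have hrow : ∀ i, ∑ j, Q i j = 0 := lap_row_sum G c
  have hne : ∀ i j, i ≠ j → Q i j = if G.Adj i j then -c i j else 0 :=
    fun i j h => lap_apply_ne G c i j h
  have hdiag : ∀ i, Q i i = ∑ k, if G.Adj i k then c i k else 0 :=
    fun i => lap_apply_diag G c i
  have hcol : ∀ j, ∑ i, Q i j = 0 := by
    intro j
    have : ∑ i, Q i j = ∑ i, Q j i :=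
      Finset.sum_congr rfl fun i _ => lap_symm G c hsymm i j
    rw [this, hrow j]
  -- column sums of the two projections vanish
  have hPcol : ∀ j, ∑ a, (Q * Qd) a j = 0 := by
    intro j
    have e : ∑ a, (Q * Qd) a j = ∑ k, (∑ a, Q a k) * Qd k j := by
      simp only [mul_apply]
      rw [Finset.sum_comm]
      exact Finset.sum_congr rfl fun k _ => by rw [Finset.sum_mul]
    rw [e]
    simp [hcol]
  have hScol : ∀ j, ∑ a, (Qd * Q) a j = 0 := by
    intro j
    have e1 : ∀ a, (Qd * Q) a j = (Qd * Q) j a := by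
      intro a
      conv_lhs => rw [← h4]
      rfl
    have e : ∑ a, (Qd * Q) a j = ∑ a, ∑ k, Qd j k * Q k a := by
      exact Finset.sum_congr rfl fun a _ => by rw [e1 a, mul_apply]
    rw [e, Finset.sum_comm]
    have e2 : ∀ k, ∑ a, Qd j k * Q k a = Qd j k * ∑ a, Q k a :=
      fun k => by rw [Finset.mul_sum]
    rw [Finset.sum_congr rfl fun k _ => e2 k]
    simp [hrow]
  have hP := proj_entry G c hsymm hpos hconn (Q * Qd) hQP hPcol
  have hS := proj_entry G c hsymm hpos hconn (Qd * Q) hQS hScol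
  -- sums against Qd entries
  have hsum1 : ∀ i x, ∑ j, Q i j * Qd j x = (Q * Qd) i x := fun i x => (mul_apply).symm
  have hsum2 : ∀ i x, ∑ j, Q i j * Qd x j = (Qd * Q) i x := by
    intro i x
    rw [← hS', mul_apply]
    rfl
  -- the curvature identity
  have hnc : ∀ i, 2 * nodeCurv G c Qd i
      = 2 + (∑ j, Q i j * Qd j j) - (Q * Qd) i i - (Qd * Q) i i := by
    intro i
    have hterm : ∀ j, (if G.Adj i j then c i j * effRes Qd i j else 0 : ℝ)
        = -(Q i j * Qd i i) - Q i j * Qd j j + Q i j * Qd i j + Q i j * Qd j i := by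
      intro j
      by_cases hj : i = j
      · subst hj
        rw [if_neg (G.irrefl)]
        ring
      · rw [hne i j hj]
        by_cases ha : G.Adj i j
        · rw [if_pos ha, if_pos ha, effRes_eq]
          ring
        · rw [if_neg ha, if_neg ha]
          ring
    have hsumite : (∑ j, if G.Adj i j then c i j * effRes Qd i j else 0 : ℝ)
        = -(∑ j, Q i j * Qd j j) + (Qd * Q) i i + (Q * Qd) i i := by
      rw [Finset.sum_congr rfl fun j _ => hterm j]
      rw [Finset.sum_add_distrib, Finset.sum_add_distrib, Finset.sum_sub_distrib]
      have a1 : ∑ j, -(Q i j * Qd i i) = 0 := by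
        rw [Finset.sum_neg_distrib, ← Finset.sum_mul, hrow i]
        ring
      rw [a1, hsum1 i i, hsum2 i i]
      ring
    have hunfold : nodeCurv G c Qd i
        = 1 - 1/2 * ∑ j, (if G.Adj i j then c i j * effRes Qd i j else 0 : ℝ) := by
      rw [nodeCurv]
      congr 1
      congr 1
      exact Finset.sum_congr rfl fun j _ => by split_ifs <;> rfl
    rw [hunfold, hsumite]
    ring
  -- the key entrywise identity
  have hkey : ∀ i x, ∑ j, Q i j * effRes Qd j x
      = -2 * (if i = x then (1:ℝ) else 0) + 2 * nodeCurv G c Qd i := by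
    intro i x
    have e1 : ∑ j, Q i j * effRes Qd j x
        = ∑ j, (Q i j * Qd j j + Q i j * Qd x x - Q i j * Qd j x - Q i j * Qd x j) :=
      Finset.sum_congr rfl fun j _ => by rw [effRes_eq]; ring
    have e2 : ∑ j, Q i j * Qd x x = 0 := by
      rw [← Finset.sum_mul, hrow i, zero_mul]
    rw [e1, Finset.sum_sub_distrib, Finset.sum_sub_distrib, Finset.sum_add_distrib,
      e2, hsum1 i x, hsum2 i x, hnc i]
    by_cases hix : i = x
    · subst hix
      rw [if_pos rfl]
      ring
    · rw [if_neg hix]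
      have hp := hP i x hix
      have hs := hS i x hix
      linarith
  constructor
  · ext i x
    have lhs : (Q * resMatrix Qd) i x = ∑ j, Q i j * effRes Qd j x := by
      rw [mul_apply]
      rfl
    rw [lhs, hkey i x]
    simp only [Matrix.add_apply, Matrix.smul_apply, Matrix.one_apply, vecMulVec_apply,
      smul_eq_mul, mul_one]
  · intro i x hix
    have hk := hkey i x
    rw [if_neg hix] at hk
    have split : ∑ j, Q i j * effRes Qd j x
        = (∑ j, if G.Adj i j then c i j else 0) * effRes Qd i x -
            ∑ j, (if G.Adj i j then c i j * effRes Qd j x else 0) := by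
      rw [← Finset.add_sum_erase _ (fun j => Q i j * effRes Qd j x) (Finset.mem_univ i)]
      rw [hdiag]
      have e3 : ∑ j ∈ Finset.univ.erase i, Q i j * effRes Qd j x
          = ∑ j ∈ Finset.univ.erase i, -(if G.Adj i j then c i j * effRes Qd j x else 0) := by
        refine Finset.sum_congr rfl fun j hj => ?_
        rw [hne i j (Ne.symm (Finset.ne_of_mem_erase hj))]
        by_cases ha : G.Adj i j
        · rw [if_pos ha, if_pos ha]; ring
        · rw [if_neg ha, if_neg ha]; ring
      rw [e3, Finset.sum_erase (f := fun j => -(if G.Adj i j then c i j * effRes Qd j x else 0))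
        (h := by simp [G.irrefl]), Finset.sum_neg_distrib]
      ring
    rw [split] at hk
    linarith
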